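/- X(0, −1, 0) = 0 and X(0, 1, 0) = 0, i.e. p_L = (0,−1,0) and p_R = (0,1,0) are equilibria of X. Moreover the Jacobian matrix DX(0,−1,0) has characteristic polynomial (λ + 1/k)·(λ − 2)·(λ − (2 + 1/k)), so its eigenvalues are −1/k, 2 and 2 + 1/k; and the Jacobian matrix DX(0,1,0) has characteristic polynomial (λ + 2 + 1/k)·(λ + 2)·(λ − 1/k), so its eigenvalues are −2 − 1/k, −2 and 1/k. In particular both equilibria are hyperbolic. -/

import Mathlib

open Polynomial

/-- The blown-up visible-fold vector field in the directional chart `r̄ = 1`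
of the spherical blowup. -/
noncomputable def chartRVF (k : ℕ) (f₁ g₁ φp : ℝ × ℝ → ℝ) (v : Fin 3 → ℝ) : Fin 3 → ℝ :=
  ![(1 / (2 * (k : ℝ))) * v 0 *
      ((1 - v 0 ^ k * v 2 ^ k * φp (v 0 ^ (2 * k), v 0 * v 2)) *
          (2 * v 1 + v 0 ^ k * g₁ (v 0 ^ k, v 1)) +
        v 2 ^ k * φp (v 0 ^ (2 * k), v 0 * v 2)),
    (1 - v 0 ^ k * v 2 ^ k * φp (v 0 ^ (2 * k), v 0 * v 2)) *
        (1 + v 0 ^ k * f₁ (v 0 ^ k, v 1)) -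
      (1 / 2) *
        ((1 - v 0 ^ k * v 2 ^ k * φp (v 0 ^ (2 * k), v 0 * v 2)) *
            (2 * v 1 + v 0 ^ k * g₁ (v 0 ^ k, v 1)) +
          v 2 ^ k * φp (v 0 ^ (2 * k), v 0 * v 2)) * v 1,
    -((2 * (k : ℝ) + 1) / (2 * (k : ℝ))) *
        ((1 - v 0 ^ k * v 2 ^ k * φp (v 0 ^ (2 * k), v 0 * v 2)) *
            (2 * v 1 + v 0 ^ k * g₁ (v 0 ^ k, v 1)) +
          v 2 ^ k * φp (v 0 ^ (2 * k), v 0 * v 2)) * v 2]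


open ContinuousLinearMap
lemma pow_proj_hasFDerivAt (k : ℕ) (hk : 1 ≤ k) (i : Fin 3) (p : Fin 3 → ℝ) (hp : p i = 0) :
    HasFDerivAt (fun v : Fin 3 → ℝ => v i ^ k)
      (((k : ℝ) * 0 ^ (k - 1)) • (ContinuousLinearMap.proj i : (Fin 3 → ℝ) →L[ℝ] ℝ)) p := by
  obtain ⟨m, rfl⟩ : ∃ m, k = m + 1 := ⟨k - 1, by omega⟩
  have hd : DifferentiableAt ℝ (fun v : Fin 3 → ℝ => v i ^ m) p :=
    (hasFDerivAt_apply i p).differentiableAt.pow m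
  have h := (hasFDerivAt_apply i p).mul hd.hasFDerivAt
  simp only [hp, zero_smul, zero_add] at h
  have hfun : (fun v : Fin 3 → ℝ => v i * v i ^ m) = fun v => v i ^ (m + 1) := by
    funext v; rw [pow_succ']
  rw [show ((fun f : Fin 3 → ℝ => f i) * fun v => v i ^ m) = _ from hfun] at h
  have : ((m + 1 : ℕ) : ℝ) * 0 ^ (m + 1 - 1) = (0 : ℝ) ^ m := by
    rcases Nat.eq_zero_or_pos m with rfl | hm
    · norm_num
    · simp [zero_pow (by omega : m ≠ 0)]
  rw [this]
  exact h

set_option maxHeartbeats 1000000 in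
lemma chartRVF_hasFDerivAt (k : ℕ) (hk : 1 ≤ k) (f₁ g₁ φp : ℝ × ℝ → ℝ)
    (hf₁ : ContDiff ℝ 1 f₁) (hg₁ : ContDiff ℝ 1 g₁) (hφp : ContDiff ℝ 1 φp) (s : ℝ) :
    HasFDerivAt (chartRVF k f₁ g₁ φp)
      (LinearMap.toContinuousLinearMap (Matrix.toLin' (Matrix.of
        ![![s / (k : ℝ), 0, 0],
          ![(k : ℝ) * 0 ^ (k - 1) * f₁ (0, s)
              - s / 2 * ((k : ℝ) * 0 ^ (k - 1) * g₁ (0, s)), -(2 * s),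
            -(s / 2) * ((k : ℝ) * 0 ^ (k - 1) * φp (0, 0))],
          ![0, 0, -((2 * (k : ℝ) + 1) * s / (k : ℝ))]]))) ![0, s, 0] := by
  have hk0 : k ≠ 0 := by omega
  have hkR : (k : ℝ) ≠ 0 := Nat.cast_ne_zero.mpr hk0
  set p : Fin 3 → ℝ := ![0, s, 0] with hpdef
  have hp0 : p 0 = 0 := rfl
  have hp1 : p 1 = s := rfl
  have hp2 : p 2 = 0 := rfl
  -- basic blocks
  have h0 : HasFDerivAt (fun v : Fin 3 → ℝ => v 0)
      (ContinuousLinearMap.proj 0 : (Fin 3 → ℝ) →L[ℝ] ℝ) p := hasFDerivAt_apply 0 p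
  have h1 : HasFDerivAt (fun v : Fin 3 → ℝ => v 1)
      (ContinuousLinearMap.proj 1 : (Fin 3 → ℝ) →L[ℝ] ℝ) p := hasFDerivAt_apply 1 p
  have h2 : HasFDerivAt (fun v : Fin 3 → ℝ => v 2)
      (ContinuousLinearMap.proj 2 : (Fin 3 → ℝ) →L[ℝ] ℝ) p := hasFDerivAt_apply 2 p
  have hA := pow_proj_hasFDerivAt k hk 0 p hp0
  have hE := pow_proj_hasFDerivAt k hk 2 p hp2
  have hA2 := pow_proj_hasFDerivAt (2 * k) (by omega) 0 p hp0
  have hm := h0.mul h2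
  -- Φ
  have hφd : HasFDerivAt φp (fderiv ℝ φp ((fun v : Fin 3 → ℝ => (v 0 ^ (2 * k), v 0 * v 2)) p))
      ((fun v : Fin 3 → ℝ => (v 0 ^ (2 * k), v 0 * v 2)) p) :=
    ((hφp.differentiable one_ne_zero) _).hasFDerivAt
  have hΦ := hφd.comp p (hA2.prodMk hm)
  -- f₁, g₁ compositions
  have hfd : HasFDerivAt f₁ (fderiv ℝ f₁ ((fun v : Fin 3 → ℝ => (v 0 ^ k, v 1)) p))
      ((fun v : Fin 3 → ℝ => (v 0 ^ k, v 1)) p) := ((hf₁.differentiable one_ne_zero) _).hasFDerivAt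
  have hf := hfd.comp p (hA.prodMk h1)
  have hgd : HasFDerivAt g₁ (fderiv ℝ g₁ ((fun v : Fin 3 → ℝ => (v 0 ^ k, v 1)) p))
      ((fun v : Fin 3 → ℝ => (v 0 ^ k, v 1)) p) := ((hg₁.differentiable one_ne_zero) _).hasFDerivAt
  have hg := hgd.comp p (hA.prodMk h1)
  -- composite pieces
  have hAE := hA.mul hE
  have hAEΦ := hAE.mul hΦ
  have h1m := (hasFDerivAt_const (1 : ℝ) p).sub hAEΦ
  have hAG := hA.mul hg
  have hsum := (h1.const_mul (2 : ℝ)).add hAG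
  have hEΦ := hE.mul hΦ
  have hF := (h1m.mul hsum).add hEΦ
  have hAf := hA.mul hf
  have h1Af := (hasFDerivAt_const (1 : ℝ) p).add hAf
  rw [hasFDerivAt_pi']
  intro i
  fin_cases i
  · simp only [chartRVF, Matrix.cons_val_zero]
    refine ((h0.const_mul (1 / (2 * (k : ℝ)))).mul hF).congr_fderiv ?_
    refine ContinuousLinearMap.ext fun w => ?_
    simp [hp0, hp1, hp2, zero_pow hk0, (show (0:ℝ)^(2*k) = 0 from zero_pow (by omega)),
      (show (0:ℝ)^(k*2) = 0 from zero_pow (by omega)), Matrix.toLin'_apply, Matrix.mulVec,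
      dotProduct, Fin.sum_univ_three, Function.comp]
    field_simp
  · simp only [chartRVF, Matrix.cons_val_one, Matrix.head_cons]
    refine ((h1m.mul h1Af).sub ((hF.const_mul (1 / 2 : ℝ)).mul h1)).congr_fderiv ?_
    refine ContinuousLinearMap.ext fun w => ?_
    simp [hp0, hp1, hp2, zero_pow hk0, (show (0:ℝ)^(2*k) = 0 from zero_pow (by omega)),
      (show (0:ℝ)^(k*2) = 0 from zero_pow (by omega)), Matrix.toLin'_apply, Matrix.mulVec,
      dotProduct, Fin.sum_univ_three, Function.comp]
    ring
  · simp only [chartRVF, Matrix.cons_val_two, Matrix.tail_cons, Matrix.head_cons]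
    refine ((hF.const_mul (-((2 * (k : ℝ) + 1) / (2 * (k : ℝ))))).mul h2).congr_fderiv ?_
    refine ContinuousLinearMap.ext fun w => ?_
    simp [hp0, hp1, hp2, zero_pow hk0, (show (0:ℝ)^(2*k) = 0 from zero_pow (by omega)),
      (show (0:ℝ)^(k*2) = 0 from zero_pow (by omega)), Matrix.toLin'_apply, Matrix.mulVec,
      dotProduct, Fin.sum_univ_three, Function.comp]
    left
    field_simp

lemma charpoly_fin3 (a b c d e : ℝ) :
    (Matrix.of ![![a,0,0],![d,b,e],![0,0,c]]).charpoly
      = (X - C a) * (X - C b) * (X - C c) := by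
  rw [Matrix.charpoly, Matrix.det_fin_three]
  simp [Matrix.charmatrix_apply, Matrix.one_apply, Matrix.diagonal]

theorem visible_fold_pL_pR_hyperbolic (k : ℕ) (hk : 1 ≤ k)
    (f₁ g₁ φp : ℝ × ℝ → ℝ)
    (hf₁ : ContDiff ℝ 1 f₁) (hg₁ : ContDiff ℝ 1 g₁) (hφp : ContDiff ℝ 1 φp) :
    chartRVF k f₁ g₁ φp ![0, -1, 0] = 0 ∧
    chartRVF k f₁ g₁ φp ![0, 1, 0] = 0 ∧
    (∃ J : Matrix (Fin 3) (Fin 3) ℝ,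
      HasFDerivAt (chartRVF k f₁ g₁ φp)
        (LinearMap.toContinuousLinearMap (Matrix.toLin' J)) ![0, -1, 0] ∧
      J.charpoly = (X + C (1 / (k : ℝ))) * (X - C 2) * (X - C (2 + 1 / (k : ℝ)))) ∧
    (∃ J : Matrix (Fin 3) (Fin 3) ℝ,
      HasFDerivAt (chartRVF k f₁ g₁ φp)
        (LinearMap.toContinuousLinearMap (Matrix.toLin' J)) ![0, 1, 0] ∧
      J.charpoly = (X + C (2 + 1 / (k : ℝ))) * (X + C 2) * (X - C (1 / (k : ℝ)))) := by
  have hk0 : k ≠ 0 := by omega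
  have hkR : (k : ℝ) ≠ 0 := Nat.cast_ne_zero.mpr hk0
  refine ⟨?_, ?_, ?_, ?_⟩
  · funext i
    fin_cases i <;>
      simp [chartRVF, zero_pow hk0, (show (0:ℝ)^(2*k) = 0 from zero_pow (by omega))]
  · funext i
    fin_cases i <;>
      simp [chartRVF, zero_pow hk0, (show (0:ℝ)^(2*k) = 0 from zero_pow (by omega))]
  · refine ⟨_, chartRVF_hasFDerivAt k hk f₁ g₁ φp hf₁ hg₁ hφp (-1), ?_⟩
    rw [charpoly_fin3,
      show ((-1 : ℝ)) / (k : ℝ) = -(1 / (k : ℝ)) by ring,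
      show (-(2 * (-1 : ℝ))) = (2 : ℝ) by norm_num,
      show (-((2 * (k : ℝ) + 1) * (-1) / (k : ℝ))) = 2 + 1 / (k : ℝ) by
        field_simp]
    rw [map_neg, sub_neg_eq_add]
  · refine ⟨_, chartRVF_hasFDerivAt k hk f₁ g₁ φp hf₁ hg₁ hφp 1, ?_⟩
    rw [charpoly_fin3,
      show ((1 : ℝ)) / (k : ℝ) = 1 / (k : ℝ) by ring,
      show (-(2 * (1 : ℝ))) = -(2 : ℝ) by norm_num,
      show (-((2 * (k : ℝ) + 1) * 1 / (k : ℝ))) = -(2 + 1 / (k : ℝ)) by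
        field_simp]
    rw [map_neg, map_neg, sub_neg_eq_add, sub_neg_eq_add]
    ring
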